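/- Let X be a finite set, P a probability distribution on X with full support, and P̂ a probability distribution on X with full support. For a positive integer ρ, define the expected factorial moment of memoryless guessing as E_P[V_{P̂,ρ}(X)] = ∑_x P(x)·P̂(x)^{-ρ} (using the identity E[V] = E_P[P̂(X)^{-ρ}]). Then (1/ρ)·log(∑_x P(x)·P̂(x)^{-ρ}) ≥ H_α(P) with α = 1/(1+ρ), and equality holds if and only if P̂(x) = P(x)^α / ∑_y P(y)^α for all x. -/

import Mathlib

open Real Finset

lemma aux_poly14 (n : ℕ) (t : ℝ) :
    (t - 1) ^ 2 * ∑ k ∈ Finset.range n, ((k : ℝ) + 1) * t ^ k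
      = n * t ^ (n + 1) - (n + 1) * t ^ n + 1 := by
  induction n with
  | zero => simp
  | succ m ih =>
    rw [Finset.sum_range_succ, mul_add, ih]
    push_cast
    ring

lemma aux_key14 {ρ : ℕ} (hρ : 0 < ρ) {t : ℝ} (ht : 0 < t) :
    0 ≤ (t ^ ρ)⁻¹ - ((1 + (ρ : ℝ)) - ρ * t) ∧
      ((t ^ ρ)⁻¹ - ((1 + (ρ : ℝ)) - ρ * t) = 0 ↔ t = 1) := by
  have hg : 0 < ∑ k ∈ Finset.range ρ, ((k : ℝ) + 1) * t ^ k := by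
    apply Finset.sum_pos
    · intro k _
      positivity
    · exact Finset.nonempty_range_iff.mpr hρ.ne'
  have htρ : 0 < t ^ ρ := pow_pos ht ρ
  have hid : (t ^ ρ)⁻¹ - ((1 + (ρ : ℝ)) - ρ * t)
      = (t - 1) ^ 2 * (∑ k ∈ Finset.range ρ, ((k : ℝ) + 1) * t ^ k) / t ^ ρ := by
    rw [eq_div_iff htρ.ne', aux_poly14]
    field_simp
    ring
  constructor
  · rw [hid]
    positivity
  · rw [hid, div_eq_zero_iff]
    constructor
    · rintro (h | h)
      · rcases mul_eq_zero.mp h with h2 | h2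
        · have : t - 1 = 0 := by
            exact pow_eq_zero_iff (n := 2) (by norm_num) |>.mp h2
          linarith
        · exact absurd h2 hg.ne'
      · exact absurd h htρ.ne'
    · intro h
      left
      rw [h]
      ring


theorem stmt14 {X : Type*} [Fintype X] [Nonempty X]
    (P : X → ℝ) (hP : ∀ x, 0 < P x) (hPsum : ∑ x, P x = 1)
    (Phat : X → ℝ) (hPhat : ∀ x, 0 < Phat x) (hPhatsum : ∑ x, Phat x = 1)
    (ρ : ℕ) (hρ : 0 < ρ) (α : ℝ) (hα : α = 1 / (1 + (ρ : ℝ))) :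
    ((1 / (ρ : ℝ)) * Real.logb 2 (∑ x, P x * Phat x ^ (-(ρ : ℝ))) ≥
      (1 / (1 - α)) * Real.logb 2 (∑ x, P x ^ α)) ∧
    ((1 / (ρ : ℝ)) * Real.logb 2 (∑ x, P x * Phat x ^ (-(ρ : ℝ))) =
      (1 / (1 - α)) * Real.logb 2 (∑ x, P x ^ α) ↔
      ∀ x, Phat x = P x ^ α / ∑ y, P y ^ α) := by
  have hρR : (0 : ℝ) < ρ := by exact_mod_cast hρ
  have hρ1 : (0 : ℝ) < 1 + ρ := by linarith
  have hSpos : 0 < ∑ x, P x ^ α :=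
    Finset.sum_pos (fun x _ => Real.rpow_pos_of_pos (hP x) α) Finset.univ_nonempty
  set S : ℝ := ∑ x, P x ^ α with hSdef
  -- escort distribution
  set Q : X → ℝ := fun x => P x ^ α / S with hQdef
  have hQpos : ∀ x, 0 < Q x := fun x => div_pos (Real.rpow_pos_of_pos (hP x) α) hSpos
  have hQsum : ∑ x, Q x = 1 := by
    simp only [hQdef, ← Finset.sum_div]
    exact div_self hSpos.ne'
  set t : X → ℝ := fun x => Phat x / Q x with htdef
  have htpos : ∀ x, 0 < t x := fun x => div_pos (hPhat x) (hQpos x)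
  have hQt : ∀ x, Q x * t x = Phat x := fun x => by
    simp only [htdef]; rw [mul_comm, div_mul_cancel₀ _ (hQpos x).ne']
  -- key exponent fact
  have hPαpow : ∀ x, (P x ^ α) ^ (ρ + 1 : ℕ) = P x := by
    intro x
    have h1 : α * ((ρ + 1 : ℕ) : ℝ) = 1 := by
      push_cast
      rw [hα]
      field_simp
      ring
    rw [← Real.rpow_natCast (P x ^ α) (ρ + 1), ← Real.rpow_mul (hP x).le, h1,
      Real.rpow_one]
  -- pointwise identity
  have hterm : ∀ x, P x * Phat x ^ (-(ρ : ℝ)) = S ^ (ρ + 1) * (Q x * (t x ^ ρ)⁻¹) := by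
    intro x
    rw [Real.rpow_neg (hPhat x).le, Real.rpow_natCast]
    have h1 := hPαpow x
    have hPh : Phat x ≠ 0 := (hPhat x).ne'
    have hQ : Q x ≠ 0 := (hQpos x).ne'
    have hSne : S ≠ 0 := hSpos.ne'
    simp only [htdef]
    have hQpow : Q x ^ ρ * Q x = P x / S ^ (ρ + 1) := by
      rw [← pow_succ]
      simp only [hQdef, div_pow, h1]
    rw [div_pow, inv_div, show Q x * (Q x ^ ρ / Phat x ^ ρ)
        = Q x ^ ρ * Q x / Phat x ^ ρ from by ring, hQpow]
    field_simp
  have hA : (∑ x, P x * Phat x ^ (-(ρ : ℝ))) = S ^ (ρ + 1) * ∑ x, Q x * (t x ^ ρ)⁻¹ := by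
    rw [Finset.mul_sum]
    exact Finset.sum_congr rfl fun x _ => hterm x
  -- tangent sum = 1
  have htang : ∑ x, Q x * ((1 + (ρ : ℝ)) - ρ * t x) = 1 := by
    have e : ∀ x ∈ Finset.univ (α := X), Q x * ((1 + (ρ : ℝ)) - ρ * t x)
        = (1 + (ρ : ℝ)) * Q x - ρ * Phat x := by
      intro x _; rw [← hQt x]; ring
    rw [Finset.sum_congr rfl e, Finset.sum_sub_distrib,
      ← Finset.mul_sum, ← Finset.mul_sum, hQsum, hPhatsum]
    ring
  set D : X → ℝ := fun x => Q x * ((t x ^ ρ)⁻¹ - ((1 + (ρ : ℝ)) - ρ * t x)) with hDdef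
  have hDnonneg : ∀ x ∈ Finset.univ (α := X), 0 ≤ D x := fun x _ =>
    mul_nonneg (hQpos x).le (aux_key14 hρ (htpos x)).1
  have hB : ∑ x, Q x * (t x ^ ρ)⁻¹ = 1 + ∑ x, D x := by
    have : ∀ x, Q x * (t x ^ ρ)⁻¹
        = Q x * ((1 + (ρ : ℝ)) - ρ * t x) + D x := fun x => by simp only [hDdef]; ring
    rw [Finset.sum_congr rfl fun x _ => this x, Finset.sum_add_distrib, htang]
  have hDsum_nonneg : 0 ≤ ∑ x, D x := Finset.sum_nonneg hDnonneg
  have hSpow : 0 < S ^ (ρ + 1) := pow_pos hSpos _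
  have hAge : S ^ (ρ + 1) ≤ ∑ x, P x * Phat x ^ (-(ρ : ℝ)) := by
    rw [hA, hB]
    nlinarith
  -- RHS rewriting
  have hinv : 1 / (1 - α) = ((ρ : ℝ) + 1) / ρ := by
    rw [hα]
    rw [div_eq_div_iff (by rw [sub_ne_zero]; intro h; rw [eq_div_iff hρ1.ne'] at h; linarith) hρR.ne']
    field_simp
    ring
  have hRHS : (1 / (1 - α)) * Real.logb 2 S
      = (1 / (ρ : ℝ)) * Real.logb 2 (S ^ (ρ + 1)) := by
    rw [Real.logb_pow, hinv]
    push_cast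
    ring
  have hlogmono : Real.logb 2 (S ^ (ρ + 1)) ≤ Real.logb 2 (∑ x, P x * Phat x ^ (-(ρ : ℝ))) :=
    Real.logb_le_logb_of_le one_lt_two hSpow hAge
  constructor
  · rw [hRHS]
    apply mul_le_mul_of_nonneg_left hlogmono (by positivity)
  · rw [hRHS]
    constructor
    · intro h
      have h2 : Real.logb 2 (∑ x, P x * Phat x ^ (-(ρ : ℝ))) = Real.logb 2 (S ^ (ρ + 1)) := by
        have := mul_left_cancel₀ (a := 1 / (ρ : ℝ)) (by positivity) h
        exact this
      have hAeq : (∑ x, P x * Phat x ^ (-(ρ : ℝ))) = S ^ (ρ + 1) := by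
        have hApos : 0 < ∑ x, P x * Phat x ^ (-(ρ : ℝ)) := lt_of_lt_of_le hSpow hAge
        exact Real.logb_injOn_pos one_lt_two (Set.mem_Ioi.mpr hApos) (Set.mem_Ioi.mpr hSpow) h2
      rw [hA, hB] at hAeq
      have hDzero : ∑ x, D x = 0 := by
        have := mul_left_cancel₀ hSpow.ne' (by rw [hAeq]; ring : S ^ (ρ+1) * (1 + ∑ x, D x) = S ^ (ρ+1) * 1)
        linarith
      intro x
      have hDx : D x = 0 := (Finset.sum_eq_zero_iff_of_nonneg hDnonneg).mp hDzero x (Finset.mem_univ x)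
      have ht1 : t x = 1 := by
        have h3 : (t x ^ ρ)⁻¹ - ((1 + (ρ : ℝ)) - ρ * t x) = 0 := by
          rcases mul_eq_zero.mp hDx with h4 | h4
          · exact absurd h4 (hQpos x).ne'
          · exact h4
        exact (aux_key14 hρ (htpos x)).2.mp h3
      have : Phat x = Q x := by
        have := (div_eq_one_iff_eq (hQpos x).ne').mp ht1
        exact this
      simpa [hQdef] using this
    · intro h
      have ht1 : ∀ x, t x = 1 := fun x => by
        simp only [htdef, hQdef]
        rw [div_eq_one_iff_eq (hQpos x).ne']
        simpa [hQdef] using h x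
      have hDzero : ∀ x, D x = 0 := fun x => by
        simp only [hDdef, ht1 x]
        simp
      rw [hA, hB, Finset.sum_eq_zero fun x _ => hDzero x]
      norm_num
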